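/- For any two elements x, y ∈ Γ of the same length m ≥ 1, there exists a measure-preserving Borel automorphism k of (Ω, ν) such that k maps Ω^x bijectively onto Ω^y (up to a null set), k is the identity on Ω \ (Ω^x ∪ Ω^y), and for ν-a.e. ω ∈ Ω, kω ∈ Γω (i.e., k lies in the measure-preserving full group [Γ]₀). -/

import Mathlib

open MeasureTheory
open scoped ENNReal

/-- A directed letter: generators of `ℤ₂ * ⋯ * ℤ₂ * ℤ * ⋯ * ℤ` (s copies of ℤ₂,
t copies of ℤ) together with the inverses of the infinite-order generators. -/
abbrev Letter (s t : ℕ) := Sum (Fin s) (Fin t × Bool)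

/-- Formal inverse of a letter. -/
def Letter.inv {s t : ℕ} : Letter s t → Letter s t
  | .inl i => .inl i
  | .inr (j, b) => .inr (j, !b)

/-- A list of letters is a reduced word if no letter is followed by its inverse. -/
def RedWord {s t : ℕ} (w : List (Letter s t)) : Prop :=
  w.Chain' (fun a b => b ≠ a.inv)

/-- The boundary of the tree: semi-infinite reduced words. -/
def Boundary (s t : ℕ) : Type := {ω : ℕ → Letter s t // ∀ k, ω (k + 1) ≠ (ω k).inv}

/-- The cylinder set of boundary points beginning with the word `x`. -/
def cyl {s t : ℕ} (x : List (Letter s t)) : Set (Boundary s t) :=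
  {ω | ∀ i, (h : i < x.length) → ω.1 i = x.get ⟨i, h⟩}

/-- The Borel σ-algebra on the boundary, generated by the (nontrivial) cylinder sets. -/
instance {s t : ℕ} : MeasurableSpace (Boundary s t) :=
  MeasurableSpace.generateFrom
    {S | ∃ x : List (Letter s t), RedWord x ∧ x ≠ [] ∧ S = cyl x}

/-- The shift, deleting the first letter of a boundary word. -/
def shift {s t : ℕ} (ω : Boundary s t) : Boundary s t :=
  ⟨fun k => ω.1 (k + 1), fun k => ω.2 (k + 1)⟩

/-- Left multiplication of a boundary word by a single letter, with cancellation. -/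
def prepend {s t : ℕ} (a : Letter s t) (ω : Boundary s t) : Boundary s t :=
  if h : ω.1 0 = a.inv then shift ω
  else ⟨fun k => match k with
        | 0 => a
        | k + 1 => ω.1 k,
      by
        intro k
        match k with
        | 0 => simpa using h
        | k + 1 => exact ω.2 k⟩

/-- The action of a word `w ∈ Γ` on the boundary by left multiplication and reduction. -/
def act {s t : ℕ} (w : List (Letter s t)) (ω : Boundary s t) : Boundary s t :=
  w.foldr prepend ω

/-- The reduced word representing the inverse group element. -/
def invWord {s t : ℕ} (w : List (Letter s t)) : List (Letter s t) :=
  (w.reverse).map Letter.inv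

namespace CylEx

variable {s t : ℕ}

@[simp] lemma Letter.inv_inv (a : Letter s t) : a.inv.inv = a := by
  rcases a with i | ⟨j, b⟩ <;> simp [Letter.inv]

lemma Letter.inv_injective : Function.Injective (Letter.inv (s := s) (t := t)) :=
  Function.LeftInverse.injective Letter.inv_inv

/-- Sequences satisfying the boundary (reducedness) condition. -/
def BSeq (ω : ℕ → Letter s t) : Prop := ∀ k, ω (k + 1) ≠ (ω k).inv

/-- The recursive relabeling map: it changes `a₀` to `b₀` at the start and then
propagates the discrepancy. -/
def chainF (a₀ b₀ : Letter s t) (ω : ℕ → Letter s t) : ℕ → Letter s t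
  | 0 => Equiv.swap a₀ b₀ (ω 0)
  | (k + 1) => Equiv.swap ((ω k).inv) ((chainF a₀ b₀ ω k).inv) (ω (k + 1))

lemma chainF_comm (a₀ b₀ : Letter s t) (ω : ℕ → Letter s t) :
    chainF a₀ b₀ ω = chainF b₀ a₀ ω := by
  funext k
  induction k with
  | zero => simp [chainF, Equiv.swap_comm]
  | succ k ih => simp [chainF, ih]

lemma chainF_bseq {a₀ b₀ : Letter s t} {ω : ℕ → Letter s t} (hω : BSeq ω) :
    BSeq (chainF a₀ b₀ ω) := by
  intro k
  show Equiv.swap ((ω k).inv) ((chainF a₀ b₀ ω k).inv) (ω (k + 1)) ≠ _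
  rcases eq_or_ne (ω (k + 1)) ((chainF a₀ b₀ ω k).inv) with h | h
  · rw [h, Equiv.swap_apply_right]
    intro hc
    have h2 : ω k = chainF a₀ b₀ ω k := Letter.inv_injective hc
    exact hω k (by rw [h, ← h2])
  · rw [Equiv.swap_apply_of_ne_of_ne (hω k) h]
    exact h

lemma chainF_invol (a₀ b₀ : Letter s t) (ω : ℕ → Letter s t) :
    chainF a₀ b₀ (chainF a₀ b₀ ω) = ω := by
  funext k
  induction k with
  | zero => simp [chainF]
  | succ k ih =>
      show Equiv.swap ((chainF a₀ b₀ ω k).inv) ((chainF a₀ b₀ (chainF a₀ b₀ ω) k).inv) _ = _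
      rw [ih, Equiv.swap_comm]
      show Equiv.swap ((ω k).inv) ((chainF a₀ b₀ ω k).inv)
        (Equiv.swap ((ω k).inv) ((chainF a₀ b₀ ω k).inv) (ω (k+1))) = _
      rw [Equiv.swap_apply_self]

lemma chainF_local {a₀ b₀ : Letter s t} {ω ω' : ℕ → Letter s t} {k : ℕ}
    (h : ∀ i ≤ k, ω i = ω' i) : chainF a₀ b₀ ω k = chainF a₀ b₀ ω' k := by
  induction k with
  | zero => simp [chainF, h 0 le_rfl]
  | succ k ih =>
      show Equiv.swap _ _ _ = Equiv.swap _ _ _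
      rw [h k (Nat.le_succ k), h (k+1) le_rfl, ih (fun i hi => h i (hi.trans (Nat.le_succ k)))]

lemma chainF_zero_ne {a₀ b₀ : Letter s t} {ω : ℕ → Letter s t} (h : ω 0 ≠ a₀) :
    chainF a₀ b₀ ω 0 ≠ b₀ := by
  show Equiv.swap a₀ b₀ (ω 0) ≠ b₀
  intro hc
  exact h (by simpa using congrArg (Equiv.swap a₀ b₀) hc)

/-- Once synchronized, always synchronized. -/
lemma chainF_sync {a₀ b₀ : Letter s t} {ω : ℕ → Letter s t} {j : ℕ}
    (h : chainF a₀ b₀ ω j = ω j) : ∀ i, j ≤ i → chainF a₀ b₀ ω i = ω i := by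
  intro i hi
  induction i with
  | zero => exact (Nat.le_zero.mp hi) ▸ h
  | succ i ih =>
      rcases Nat.lt_or_ge j (i+1) with hj | hj
      · have hii := ih (Nat.lt_succ_iff.mp hj)
        show Equiv.swap ((ω i).inv) ((chainF a₀ b₀ ω i).inv) (ω (i + 1)) = _
        rw [hii, Equiv.swap_self]
        rfl
      · exact (Nat.le_antisymm hi hj) ▸ h

end CylEx
namespace CylEx

variable {s t : ℕ}

/-! ### Concatenation and prefixes of sequences -/

def dropSeq (m : ℕ) (ω : ℕ → Letter s t) : ℕ → Letter s t := fun k => ω (m + k)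

def concatSeq (z : List (Letter s t)) (τ : ℕ → Letter s t) : ℕ → Letter s t :=
  fun i => if h : i < z.length then z.get ⟨i, h⟩ else τ (i - z.length)

lemma concatSeq_lt {z : List (Letter s t)} {τ} {i : ℕ} (h : i < z.length) :
    concatSeq z τ i = z.get ⟨i, h⟩ := dif_pos h

lemma concatSeq_ge {z : List (Letter s t)} {τ} {i : ℕ} (h : z.length ≤ i) :
    concatSeq z τ i = τ (i - z.length) := dif_neg (not_lt.mpr h)

lemma dropSeq_concatSeq (z : List (Letter s t)) (τ) :
    dropSeq z.length (concatSeq z τ) = τ := by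
  funext k
  rw [dropSeq, concatSeq_ge (Nat.le_add_right _ _), Nat.add_sub_cancel_left]

lemma concatSeq_dropSeq {z : List (Letter s t)} {ω : ℕ → Letter s t}
    (h : ∀ i (hi : i < z.length), ω i = z.get ⟨i, hi⟩) :
    concatSeq z (dropSeq z.length ω) = ω := by
  funext i
  rcases lt_or_ge i z.length with hi | hi
  · rw [concatSeq_lt hi, h i hi]
  · rw [concatSeq_ge hi, dropSeq, Nat.add_sub_cancel' hi]

lemma redWord_get {w : List (Letter s t)} (hw : RedWord w) {i : ℕ} (h : i + 1 < w.length) :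
    w.get ⟨i + 1, h⟩ ≠ (w.get ⟨i, Nat.lt_of_succ_lt h⟩).inv := by
  have := List.isChain_iff_getElem.mp hw i (by omega)
  exact this

lemma concatSeq_bseq {z : List (Letter s t)} {τ : ℕ → Letter s t}
    (hz : RedWord z) (hτ : BSeq τ)
    (hjoin : ∀ h : z ≠ [], τ 0 ≠ (z.getLast h).inv) :
    BSeq (concatSeq z τ) := by
  intro k
  rcases lt_trichotomy (k + 1) z.length with h1 | h1 | h1
  · rw [concatSeq_lt h1, concatSeq_lt (Nat.lt_of_succ_lt h1)]
    exact redWord_get hz h1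
  · have hne : z ≠ [] := by intro h; rw [h] at h1; simp at h1
    have hk : k < z.length := by omega
    rw [concatSeq_lt hk, concatSeq_ge (le_of_eq h1.symm)]
    have : k + 1 - z.length = 0 := by omega
    rw [this]
    have hlast : z.getLast hne = z.get ⟨k, hk⟩ := by
      rw [List.getLast_eq_getElem]
      exact congrArg z.get (Fin.ext (by simp; omega))
    rw [← hlast]
    exact hjoin hne
  · have hk : z.length ≤ k := by omega
    rw [concatSeq_ge hk, concatSeq_ge (le_of_lt h1)]
    have : k + 1 - z.length = (k - z.length) + 1 := by omega
    rw [this]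
    exact hτ _

def prefixSeq (L : ℕ) (ω : ℕ → Letter s t) : List (Letter s t) := (List.range L).map ω

@[simp] lemma length_prefixSeq (L : ℕ) (ω : ℕ → Letter s t) :
    (prefixSeq L ω).length = L := by simp [prefixSeq]

lemma get_prefixSeq {L : ℕ} {ω : ℕ → Letter s t} {i : ℕ} (h : i < (prefixSeq L ω).length) :
    (prefixSeq L ω).get ⟨i, h⟩ = ω i := by
  simp [prefixSeq]

lemma prefixSeq_red {L : ℕ} {ω : ℕ → Letter s t} (hω : BSeq ω) : RedWord (prefixSeq L ω) := by
  rw [RedWord, List.Chain', List.isChain_iff_getElem]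
  intro i h
  simp only [prefixSeq, List.getElem_map, List.getElem_range]
  exact hω i

lemma getLast_prefixSeq {L : ℕ} (hL : 0 < L) (ω : ℕ → Letter s t) (h : prefixSeq L ω ≠ []) :
    (prefixSeq L ω).getLast h = ω (L - 1) := by
  rw [List.getLast_eq_getElem]
  simp [prefixSeq]

lemma prefixSeq_ne_nil {L : ℕ} (hL : 0 < L) (ω : ℕ → Letter s t) : prefixSeq L ω ≠ [] := by
  intro h
  have := congrArg List.length h
  simp at this
  omega

/-! ### Cylinders -/

lemma mem_cyl {z : List (Letter s t)} {ω : Boundary s t} :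
    ω ∈ cyl z ↔ ∀ i (h : i < z.length), ω.1 i = z.get ⟨i, h⟩ := Iff.rfl

lemma mem_cyl_prefixSeq {L : ℕ} {ω : Boundary s t} {τ : ℕ → Letter s t} :
    ω ∈ cyl (prefixSeq L τ) ↔ ∀ i < L, ω.1 i = τ i := by
  constructor
  · intro h i hi
    have := h i (by simpa using hi)
    rwa [get_prefixSeq] at this
  · intro h i hi
    rw [get_prefixSeq]
    exact h i (by simpa using hi)

lemma eq_of_mem_cyl_of_mem_cyl {z w : List (Letter s t)} (hl : z.length = w.length)
    {ω : Boundary s t} (h1 : ω ∈ cyl z) (h2 : ω ∈ cyl w) : z = w := by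
  apply List.ext_get hl
  intro i hi hi'
  rw [← h1 i hi, ← h2 i hi']

lemma cyl_subset_of_prefix {z w : List (Letter s t)} (h : z <+: w) : cyl w ⊆ cyl z := by
  intro ω hω i hi
  have hiw : i < w.length := lt_of_lt_of_le hi h.length_le
  have := hω i hiw
  rw [this]
  have := h.getElem hi
  simp only [List.get_eq_getElem]
  exact this.symm

/-! ### Nonemptiness of cylinders -/

lemma cyl_nonempty (hcard : 1 < Fintype.card (Letter s t)) {w : List (Letter s t)}
    (hw : RedWord w) (hne : w ≠ []) : ∃ ω : Boundary s t, ω ∈ cyl w := by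
  have hex : ∀ a : Letter s t, ∃ b : Letter s t, b ≠ a.inv := fun a =>
    Fintype.exists_ne_of_one_lt_card hcard a.inv
  choose next hnext using hex
  have hlen : 0 < w.length := List.length_pos_iff.mpr hne
  refine ⟨⟨fun i => if h : i < w.length then w.get ⟨i, h⟩
      else next^[i + 1 - w.length] (w.getLast hne), ?_⟩, ?_⟩
  · intro k
    dsimp only
    rcases lt_trichotomy (k + 1) w.length with h1 | h1 | h1
    · rw [dif_pos h1, dif_pos (Nat.lt_of_succ_lt h1)]
      exact redWord_get hw h1
    · have hk : k < w.length := by omega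
      rw [dif_neg (by omega), dif_pos hk]
      have : k + 1 + 1 - w.length = 1 := by omega
      rw [this]
      have hlast : w.getLast hne = w.get ⟨k, hk⟩ := by
        rw [List.getLast_eq_getElem]
        exact congrArg w.get (Fin.ext (by simp; omega))
      simp only [Function.iterate_one]
      rw [← hlast]
      exact hnext _
    · have hk : ¬ (k < w.length) := by omega
      rw [dif_neg (by omega), dif_neg hk]
      have : k + 1 + 1 - w.length = (k + 1 - w.length) + 1 := by omega
      rw [this, Function.iterate_succ_apply']
      exact hnext _
  · intro i hi
    simp only [dif_pos hi]

end CylEx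
namespace CylEx

variable {s t : ℕ}

/-! ### The action and orbits -/

lemma shift_iterate (N : ℕ) (ω : Boundary s t) (i : ℕ) :
    (shift^[N] ω).1 i = ω.1 (N + i) := by
  induction N generalizing ω with
  | zero => simp
  | succ N ih =>
      rw [Function.iterate_succ_apply, ih (shift ω)]
      show ω.1 (N + i + 1) = _
      have e : N + i + 1 = N + 1 + i := by omega
      rw [e]

lemma prepend_head (ω : Boundary s t) : prepend (ω.1 0) (shift ω) = ω := by
  rw [prepend]
  have hc : ¬ ((shift ω).1 0 = (ω.1 0).inv) := ω.2 0
  refine (dif_neg hc).trans ?_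
  apply Subtype.ext
  funext k
  match k with
  | 0 => rfl
  | (k + 1) => rfl

lemma prepend_inv_head (ω : Boundary s t) : prepend ((ω.1 0).inv) ω = shift ω := by
  rw [prepend]; exact dif_pos (by simp)

lemma act_cons (a : Letter s t) (l : List (Letter s t)) (ω : Boundary s t) :
    act (a :: l) ω = prepend a (act l ω) := rfl

lemma act_append (l₁ l₂ : List (Letter s t)) (ω : Boundary s t) :
    act (l₁ ++ l₂) ω = act l₁ (act l₂ ω) := by
  simp [act, List.foldr_append]

lemma prefixSeq_succ (N : ℕ) (ω : Boundary s t) :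
    prefixSeq (N + 1) ω.1 = ω.1 0 :: prefixSeq N (shift ω).1 := by
  rw [prefixSeq, List.range_succ_eq_map, List.map_cons, List.map_map]
  rfl

lemma act_prefixSeq (N : ℕ) (ω : Boundary s t) :
    act (prefixSeq N ω.1) (shift^[N] ω) = ω := by
  induction N generalizing ω with
  | zero => rfl
  | succ N ih =>
      rw [prefixSeq_succ, Function.iterate_succ_apply, act_cons, ih (shift ω), prepend_head]

lemma act_invWord_prefixSeq (N : ℕ) (ω : Boundary s t) :
    act (invWord (prefixSeq N ω.1)) ω = shift^[N] ω := by
  induction N generalizing ω with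
  | zero => rfl
  | succ N ih =>
      rw [prefixSeq_succ, invWord, List.reverse_cons, List.map_append, act_append]
      show act _ (act [(ω.1 0).inv] ω) = _
      have h1 : act [(ω.1 0).inv] ω = shift ω := prepend_inv_head ω
      rw [h1, Function.iterate_succ_apply]
      exact ih (shift ω)

lemma invWord_red {w : List (Letter s t)} (hw : RedWord w) : RedWord (invWord w) := by
  rw [RedWord, invWord, List.Chain', List.isChain_map, List.isChain_reverse]
  apply List.IsChain.imp _ hw
  intro a b h
  simp only [flip, Letter.inv_inv]
  exact fun hc => h hc.symm

lemma exists_act_of_shift_eq {τ ω : Boundary s t} (N : ℕ) (h : shift^[N] τ = shift^[N] ω) :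
    ∃ g : List (Letter s t), RedWord g ∧ act g ω = τ := by
  induction N with
  | zero =>
      simp only [Function.iterate_zero, id] at h
      exact ⟨[], List.isChain_nil, h.symm⟩
  | succ N ih =>
      by_cases h' : shift^[N] τ = shift^[N] ω
      · exact ih h'
      · have hne : τ.1 N ≠ ω.1 N := by
          intro hc
          apply h'
          apply Subtype.ext
          funext i
          match i with
          | 0 => rw [shift_iterate, shift_iterate]; exact hc
          | (i + 1) =>
              have := congrArg (fun σ => σ.1 i) h
              simp only [shift_iterate] at this ⊢
              have e1 : N + (i + 1) = N + 1 + i := by omega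
              rw [e1, this]
        refine ⟨prefixSeq (N + 1) τ.1 ++ invWord (prefixSeq (N + 1) ω.1), ?_, ?_⟩
        · rw [RedWord, List.Chain', List.isChain_append]
          refine ⟨prefixSeq_red τ.2, invWord_red (prefixSeq_red ω.2), ?_⟩
          intro a ha b hb
          have hpne : prefixSeq (N + 1) τ.1 ≠ [] := prefixSeq_ne_nil (Nat.succ_pos N) _
          rw [List.getLast?_eq_getLast hpne] at ha
          have ha' : a = τ.1 N := by
            have := getLast_prefixSeq (Nat.succ_pos N) τ.1 hpne
            simp only [Nat.succ_sub_one, Nat.add_sub_cancel] at this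
            rw [Option.mem_some_iff] at ha
            rw [← ha, this]
          have hb' : b = (ω.1 N).inv := by
            rw [invWord, List.head?_map, List.head?_reverse] at hb
            have hqne : prefixSeq (N + 1) ω.1 ≠ [] := prefixSeq_ne_nil (Nat.succ_pos N) _
            rw [List.getLast?_eq_getLast hqne] at hb
            have := getLast_prefixSeq (Nat.succ_pos N) ω.1 hqne
            simp only [Nat.succ_sub_one, Nat.add_sub_cancel] at this
            simp only [Option.map_some, Option.mem_some_iff] at hb
            rw [← hb, this]
          rw [ha', hb']
          intro hc
          exact hne (Letter.inv_injective hc).symm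
        · rw [act_append, act_invWord_prefixSeq, ← h, act_prefixSeq]

end CylEx
namespace CylEx

variable {s t : ℕ}

lemma dropSeq_bseq {m : ℕ} {ω : ℕ → Letter s t} (h : BSeq ω) : BSeq (dropSeq m ω) := by
  intro k
  have e : m + (k + 1) = (m + k) + 1 := by omega
  rw [dropSeq, dropSeq, e]
  exact h (m + k)

lemma mem_cyl_head_ne {x : List (Letter s t)} (hnex : x ≠ []) {ω : Boundary s t}
    (hωx : ω ∈ cyl x) : ω.1 x.length ≠ (x.getLast hnex).inv := by
  have hlen : 0 < x.length := List.length_pos_iff.mpr hnex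
  have h1 : ω.1 (x.length - 1) = x.get ⟨x.length - 1, by omega⟩ := hωx _ (by omega)
  have h2 := ω.2 (x.length - 1)
  have e : x.length - 1 + 1 = x.length := by omega
  rw [e] at h2
  rw [List.getLast_eq_getElem]; rw [List.get_eq_getElem] at h1; rw [← h1]
  exact h2

lemma kbranch_bseq {x y : List (Letter s t)} (hy : RedWord y)
    (hnex : x ≠ []) (hney : y ≠ []) {ω : Boundary s t} (hωx : ω ∈ cyl x) :
    BSeq (concatSeq y (chainF ((x.getLast hnex).inv) ((y.getLast hney).inv)
      (dropSeq x.length ω.1))) := by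
  refine concatSeq_bseq hy (chainF_bseq (dropSeq_bseq ω.2)) ?_
  intro h
  have : (y.getLast h) = (y.getLast hney) := rfl
  rw [this]
  apply chainF_zero_ne
  show ω.1 (x.length + 0) ≠ _
  rw [Nat.add_zero]
  exact mem_cyl_head_ne hnex hωx

section K

variable (x y : List (Letter s t))

open scoped Classical in
/-- The exchange automorphism swapping the cylinders of `x` and `y`. -/
noncomputable def kfun (hx : RedWord x) (hy : RedWord y)
    (hlen : x.length = y.length) (hnex : x ≠ []) (hney : y ≠ []) :
    Boundary s t → Boundary s t := fun ω =>
  if hωx : ω ∈ cyl x then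
    ⟨concatSeq y (chainF ((x.getLast hnex).inv) ((y.getLast hney).inv)
        (dropSeq x.length ω.1)), kbranch_bseq hy hnex hney hωx⟩
  else if hωy : ω ∈ cyl y then
    ⟨concatSeq x (chainF ((y.getLast hney).inv) ((x.getLast hnex).inv)
        (dropSeq y.length ω.1)), kbranch_bseq hx hney hnex hωy⟩
  else ω

variable (hx : RedWord x) (hy : RedWord y) (hlen : x.length = y.length)
  (hnex : x ≠ []) (hney : y ≠ [])

lemma kfun_of_mem_x {ω : Boundary s t} (hωx : ω ∈ cyl x) :
    kfun x y hx hy hlen hnex hney ω =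
      ⟨concatSeq y (chainF ((x.getLast hnex).inv) ((y.getLast hney).inv)
        (dropSeq x.length ω.1)), kbranch_bseq hy hnex hney hωx⟩ := by
  rw [kfun]; exact dif_pos hωx

lemma kfun_of_mem_y {ω : Boundary s t} (hωx : ω ∉ cyl x) (hωy : ω ∈ cyl y) :
    kfun x y hx hy hlen hnex hney ω =
      ⟨concatSeq x (chainF ((y.getLast hney).inv) ((x.getLast hnex).inv)
        (dropSeq y.length ω.1)), kbranch_bseq hx hney hnex hωy⟩ := by
  rw [kfun]; exact (dif_neg hωx).trans (dif_pos hωy)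

lemma kfun_of_not_mem {ω : Boundary s t} (hωx : ω ∉ cyl x) (hωy : ω ∉ cyl y) :
    kfun x y hx hy hlen hnex hney ω = ω := by
  rw [kfun]; exact (dif_neg hωx).trans (dif_neg hωy)

lemma concatSeq_mem_cyl {z : List (Letter s t)} {τ : ℕ → Letter s t} {h}
    (hzτ : (⟨concatSeq z τ, h⟩ : Boundary s t) = ω) :
    True := trivial

lemma kfun_mem_y {ω : Boundary s t} (hωx : ω ∈ cyl x) :
    kfun x y hx hy hlen hnex hney ω ∈ cyl y := by
  rw [kfun_of_mem_x x y hx hy hlen hnex hney hωx]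
  intro i hi
  exact concatSeq_lt hi

lemma kfun_mem_x {ω : Boundary s t} (hωy : ω ∈ cyl y) :
    kfun x y hx hy hlen hnex hney ω ∈ cyl x := by
  by_cases hωx : ω ∈ cyl x
  · have hxy : x = y := eq_of_mem_cyl_of_mem_cyl hlen hωx hωy
    subst hxy
    exact kfun_mem_y x x hx hy hlen hnex hney hωx
  · rw [kfun_of_mem_y x y hx hy hlen hnex hney hωx hωy]
    intro i hi
    exact concatSeq_lt hi

lemma kfun_invol : Function.Involutive (kfun x y hx hy hlen hnex hney) := by
  intro ω
  by_cases hωx : ω ∈ cyl x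
  · set a₀ := (x.getLast hnex).inv
    set b₀ := (y.getLast hney).inv
    rw [kfun_of_mem_x x y hx hy hlen hnex hney hωx]
    set g := chainF a₀ b₀ (dropSeq x.length ω.1) with hg
    set τ : Boundary s t := ⟨concatSeq y g, kbranch_bseq hy hnex hney hωx⟩ with hτ
    have hτy : τ ∈ cyl y := by intro i hi; exact concatSeq_lt hi
    have hdrop : dropSeq y.length τ.1 = g := dropSeq_concatSeq y g
    by_cases hτx : τ ∈ cyl x
    · have hxy : x = y := eq_of_mem_cyl_of_mem_cyl hlen hτx hτy
      rw [kfun_of_mem_x x y hx hy hlen hnex hney hτx]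
      apply Subtype.ext
      show concatSeq y (chainF a₀ b₀ (dropSeq x.length τ.1)) = ω.1
      have e : dropSeq x.length τ.1 = g := by rw [hlen]; exact hdrop
      rw [e, hg, chainF_invol]
      conv_rhs => rw [← concatSeq_dropSeq (z := x) hωx]
      subst hxy
      rfl
    · rw [kfun_of_mem_y x y hx hy hlen hnex hney hτx hτy]
      apply Subtype.ext
      show concatSeq x (chainF b₀ a₀ (dropSeq y.length τ.1)) = ω.1
      rw [hdrop, hg, chainF_comm b₀ a₀, chainF_invol]
      exact concatSeq_dropSeq hωx
  · by_cases hωy : ω ∈ cyl y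
    · set a₀ := (x.getLast hnex).inv
      set b₀ := (y.getLast hney).inv
      rw [kfun_of_mem_y x y hx hy hlen hnex hney hωx hωy]
      set g := chainF b₀ a₀ (dropSeq y.length ω.1) with hg
      set τ : Boundary s t := ⟨concatSeq x g, kbranch_bseq hx hney hnex hωy⟩ with hτ
      have hτx : τ ∈ cyl x := by intro i hi; exact concatSeq_lt hi
      rw [kfun_of_mem_x x y hx hy hlen hnex hney hτx]
      apply Subtype.ext
      show concatSeq y (chainF a₀ b₀ (dropSeq x.length τ.1)) = ω.1
      have hdrop : dropSeq x.length τ.1 = g := dropSeq_concatSeq x g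
      rw [hdrop, hg, chainF_comm a₀ b₀, chainF_invol]
      exact concatSeq_dropSeq hωy
    · rw [kfun_of_not_mem x y hx hy hlen hnex hney hωx hωy,
        kfun_of_not_mem x y hx hy hlen hnex hney hωx hωy]

lemma mem_cyl_congr {z : List (Letter s t)} {ω ω' : Boundary s t}
    (h : ∀ j < z.length, ω.1 j = ω'.1 j) : ω ∈ cyl z ↔ ω' ∈ cyl z := by
  constructor <;> intro hm i hi
  · rw [← h i hi]; exact hm i hi
  · rw [h i hi]; exact hm i hi

lemma kfun_local {L : ℕ} (hL : x.length ≤ L) {ω ω' : Boundary s t}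
    (h : ∀ j < L, ω.1 j = ω'.1 j) :
    ∀ i < L, (kfun x y hx hy hlen hnex hney ω).1 i =
      (kfun x y hx hy hlen hnex hney ω').1 i := by
  intro i hi
  have hmx : ω ∈ cyl x ↔ ω' ∈ cyl x :=
    mem_cyl_congr (fun j hj => h j (lt_of_lt_of_le hj hL))
  have hmy : ω ∈ cyl y ↔ ω' ∈ cyl y :=
    mem_cyl_congr (fun j hj => h j (lt_of_lt_of_le (hlen ▸ hj) hL))
  by_cases hωx : ω ∈ cyl x
  · rw [kfun_of_mem_x x y hx hy hlen hnex hney hωx,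
      kfun_of_mem_x x y hx hy hlen hnex hney (hmx.mp hωx)]
    show concatSeq _ _ i = concatSeq _ _ i
    rcases lt_or_ge i y.length with hiy | hiy
    · rw [concatSeq_lt hiy, concatSeq_lt hiy]
    · rw [concatSeq_ge hiy, concatSeq_ge hiy]
      apply chainF_local
      intro j hj
      show ω.1 (x.length + j) = ω'.1 (x.length + j)
      apply h
      omega
  · by_cases hωy : ω ∈ cyl y
    · rw [kfun_of_mem_y x y hx hy hlen hnex hney hωx hωy,
        kfun_of_mem_y x y hx hy hlen hnex hney (fun hc => hωx (hmx.mpr hc)) (hmy.mp hωy)]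
      show concatSeq _ _ i = concatSeq _ _ i
      rcases lt_or_ge i x.length with hix | hix
      · rw [concatSeq_lt hix, concatSeq_lt hix]
      · rw [concatSeq_ge hix, concatSeq_ge hix]
        apply chainF_local
        intro j hj
        show ω.1 (y.length + j) = ω'.1 (y.length + j)
        apply h
        omega
    · rw [kfun_of_not_mem x y hx hy hlen hnex hney hωx hωy,
        kfun_of_not_mem x y hx hy hlen hnex hney (fun hc => hωx (hmx.mpr hc))
          (fun hc => hωy (hmy.mpr hc))]
      exact h i hi

lemma kfun_preimage_cyl {w : List (Letter s t)} (hLx : x.length ≤ w.length)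
    {ω₀ : Boundary s t} (hω₀ : ω₀ ∈ cyl w) :
    (kfun x y hx hy hlen hnex hney) ⁻¹' (cyl w) =
      cyl (prefixSeq w.length (kfun x y hx hy hlen hnex hney ω₀).1) := by
  set k := kfun x y hx hy hlen hnex hney with hk
  ext ω
  simp only [Set.mem_preimage, mem_cyl_prefixSeq]
  constructor
  · intro hkw i hi
    -- k ω and ω₀ agree on first w.length letters (both in cyl w), so
    -- ω = k (k ω) and k ω₀ agree there
    have hagree : ∀ j < w.length, (k ω).1 j = ω₀.1 j := by
      intro j hj
      rw [hkw j hj, hω₀ j hj]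
    have := kfun_local x y hx hy hlen hnex hney hLx hagree i hi
    rwa [hk, kfun_invol x y hx hy hlen hnex hney ω] at this
  · intro hag
    have hagree : ∀ j < w.length, ω.1 j = (k ω₀).1 j := hag
    have := kfun_local x y hx hy hlen hnex hney hLx hagree
    intro i hi
    have h2 := this i hi
    rw [hk, kfun_invol x y hx hy hlen hnex hney ω₀] at h2
    rw [h2]
    exact hω₀ i hi

end K

end CylEx
namespace CylEx

variable {s t : ℕ}

lemma measurableSet_cyl {z : List (Letter s t)} (hz : RedWord z) (hnez : z ≠ []) :
    MeasurableSet (cyl z) :=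
  MeasurableSpace.measurableSet_generateFrom ⟨z, hz, hnez, rfl⟩

lemma prefix_of_agree {z w : List (Letter s t)} (hlw : z.length ≤ w.length)
    (h : ∀ i (hi : i < z.length), z.get ⟨i, hi⟩ = w.get ⟨i, lt_of_lt_of_le hi hlw⟩) :
    z <+: w := by
  rw [List.prefix_iff_eq_take]
  apply List.ext_get (by simp [Nat.min_eq_left hlw])
  intro i h1 h2
  simp only [List.get_eq_getElem, List.getElem_take]
  have := h i h1
  simpa using this

lemma cyl_disjoint {z w : List (Letter s t)} (hl : z.length = w.length) (hzw : z ≠ w) :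
    Disjoint (cyl z) (cyl w) :=
  Set.disjoint_left.mpr fun ω h1 h2 => hzw (eq_of_mem_cyl_of_mem_cyl hl h1 h2)

/-- The index type for decomposing a cylinder into subcylinders of length `L`. -/
def Ext (z : List (Letter s t)) (L : ℕ) : Type :=
  {v : List.Vector (Letter s t) L // RedWord v.toList ∧ z <+: v.toList}

instance (z : List (Letter s t)) (L : ℕ) : Countable (Ext z L) := by
  unfold Ext; infer_instance

lemma cyl_eq_iUnion (z : List (Letter s t)) {L : ℕ} (hL : z.length ≤ L) :
    cyl z = ⋃ v : Ext z L, cyl v.1.toList := by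
  ext ω
  constructor
  · intro hω
    have hred : RedWord (prefixSeq L ω.1) := prefixSeq_red ω.2
    have hpre : z <+: prefixSeq L ω.1 := by
      apply prefix_of_agree (by simpa using hL)
      intro i hi
      rw [get_prefixSeq, ← hω i hi]
    refine Set.mem_iUnion.mpr ⟨⟨⟨prefixSeq L ω.1, by simp⟩, ?_, ?_⟩, ?_⟩
    · exact hred
    · exact hpre
    · show ω ∈ cyl (prefixSeq L ω.1)
      exact mem_cyl_prefixSeq.mpr (fun i _ => rfl)
  · intro hω
    rcases Set.mem_iUnion.mp hω with ⟨v, hv⟩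
    exact cyl_subset_of_prefix v.2.2 hv

lemma ext_toList_length {z : List (Letter s t)} {L : ℕ} (v : Ext z L) :
    v.1.toList.length = L := v.1.2

lemma ext_toList_ne_nil {z : List (Letter s t)} {L : ℕ} (hL : 0 < L) (v : Ext z L) :
    v.1.toList ≠ [] := by
  intro h
  have := ext_toList_length v
  rw [h] at this
  simp at this
  omega

lemma ext_pairwise_disjoint (z : List (Letter s t)) (L : ℕ) :
    Pairwise (Function.onFun Disjoint (fun v : Ext z L => cyl v.1.toList)) := by
  intro v w hvw
  apply cyl_disjoint (by rw [ext_toList_length, ext_toList_length])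
  intro hc
  exact hvw (Subtype.ext (List.Vector.toList_injective hc))

section K2

variable (x y : List (Letter s t)) (hx : RedWord x) (hy : RedWord y)
  (hlen : x.length = y.length) (hnex : x ≠ []) (hney : y ≠ [])

/-- The preimage of a long cylinder under `kfun` is a cylinder of the same length. -/
lemma kfun_preimage_eq_cyl (hcard : 1 < Fintype.card (Letter s t))
    {w : List (Letter s t)} (hw : RedWord w)
    (hLx : x.length ≤ w.length) (hnew : w ≠ []) :
    ∃ w' : List (Letter s t), RedWord w' ∧ w' ≠ [] ∧ w'.length = w.length ∧
      (kfun x y hx hy hlen hnex hney) ⁻¹' (cyl w) = cyl w' := by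
  obtain ⟨ω₀, hω₀⟩ := cyl_nonempty hcard hw hnew
  refine ⟨prefixSeq w.length (kfun x y hx hy hlen hnex hney ω₀).1,
    prefixSeq_red (kfun x y hx hy hlen hnex hney ω₀).2,
    prefixSeq_ne_nil (List.length_pos_iff.mpr hnew) _, by simp,
    kfun_preimage_cyl x y hx hy hlen hnex hney hLx hω₀⟩

lemma kfun_measurable (hcard : 1 < Fintype.card (Letter s t)) :
    Measurable (kfun x y hx hy hlen hnex hney) := by
  apply measurable_generateFrom
  rintro S ⟨z, hz, hnez, rfl⟩
  rw [cyl_eq_iUnion z (le_max_left z.length x.length), Set.preimage_iUnion]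
  apply MeasurableSet.iUnion
  intro v
  obtain ⟨w', hw1, hw2, hw3, hw4⟩ := kfun_preimage_eq_cyl x y hx hy hlen hnex hney hcard
    (w := v.1.toList) v.2.1 (by rw [ext_toList_length]; exact le_max_right _ _)
    (ext_toList_ne_nil (lt_of_lt_of_le (List.length_pos_iff.mpr hnez) (le_max_left _ _)) v)
  rw [hw4]
  exact measurableSet_cyl hw1 hw2

lemma kfun_measure_preimage_cyl (hcard : 1 < Fintype.card (Letter s t))
    (ν : Measure (Boundary s t)) (n : ℕ)
    (hν : ∀ z : List (Letter s t), RedWord z → z ≠ [] →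
      ν (cyl z) = (1 / (n + 1) : ℝ≥0∞) * (1 / n) ^ (z.length - 1))
    {z : List (Letter s t)} (hz : RedWord z) (hnez : z ≠ []) :
    ν ((kfun x y hx hy hlen hnex hney) ⁻¹' (cyl z)) = ν (cyl z) := by
  set L := max z.length x.length with hL
  have hLpos : 0 < L := by
    have : 0 < z.length := List.length_pos_iff.mpr hnez
    omega
  have hdec := cyl_eq_iUnion z (le_max_left z.length x.length) (L := L)
  have hpre : ∀ v : Ext z L, ∃ w' : List (Letter s t), RedWord w' ∧ w' ≠ [] ∧
      w'.length = L ∧ (kfun x y hx hy hlen hnex hney) ⁻¹' (cyl v.1.toList) = cyl w' := by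
    intro v
    obtain ⟨w', hw1, hw2, hw3, hw4⟩ := kfun_preimage_eq_cyl x y hx hy hlen hnex hney hcard
      (w := v.1.toList) v.2.1 (by rw [ext_toList_length]; exact le_max_right _ _)
      (ext_toList_ne_nil hLpos v)
    exact ⟨w', hw1, hw2, by rw [hw3, ext_toList_length], hw4⟩
  choose w' hw1 hw2 hw3 hw4 using hpre
  rw [hdec, Set.preimage_iUnion]
  rw [measure_iUnion, measure_iUnion]
  · apply tsum_congr
    intro v
    rw [hw4 v, hν _ (hw1 v) (hw2 v), hν _ v.2.1 (ext_toList_ne_nil hLpos v), hw3 v,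
      ext_toList_length]
  · exact ext_pairwise_disjoint z L
  · intro v
    exact measurableSet_cyl v.2.1 (ext_toList_ne_nil hLpos v)
  · intro v w hvw
    exact Disjoint.preimage _ (ext_pairwise_disjoint z L hvw)
  · intro v
    rw [hw4 v]
    exact measurableSet_cyl (hw1 v) (hw2 v)

end K2

end CylEx
namespace CylEx

variable {s t : ℕ}

/-! ### The bad (never-synchronizing) set is null -/

def badSeq (a₀ b₀ : Letter s t) : ℕ → Letter s t := fun j => if Even j then b₀ else a₀.inv

def badChain (a₀ b₀ : Letter s t) : ℕ → Letter s t := fun j => if Even j then a₀ else b₀.inv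

lemma badSeq_bseq {a₀ b₀ : Letter s t} (hab : a₀ ≠ b₀) : BSeq (badSeq a₀ b₀) := by
  intro k
  by_cases hk : Even k <;>
    simp only [badSeq, Nat.even_add_one, hk, if_true, if_false, not_true, not_false_iff,
      ite_true, ite_false]
  · intro hc
    exact hab (Letter.inv_injective hc)
  · rw [Letter.inv_inv]
    exact fun hc => hab hc.symm

lemma bad_forced {a₀ b₀ : Letter s t} {ω' : ℕ → Letter s t} (hbs : BSeq ω') (h0 : ω' 0 ≠ a₀) :
    ∀ j, (∀ i, i ≤ j → chainF a₀ b₀ ω' i ≠ ω' i) →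
      ω' j = badSeq a₀ b₀ j ∧ chainF a₀ b₀ ω' j = badChain a₀ b₀ j := by
  intro j
  induction j with
  | zero =>
      intro hbad
      have hsw : Equiv.swap a₀ b₀ (ω' 0) ≠ ω' 0 := hbad 0 le_rfl
      have hcase : ω' 0 = a₀ ∨ ω' 0 = b₀ := by
        by_contra hc
        push_neg at hc
        exact hsw (Equiv.swap_apply_of_ne_of_ne hc.1 hc.2)
      have hb : ω' 0 = b₀ := hcase.resolve_left h0
      refine ⟨by simpa [badSeq] using hb, ?_⟩
      show Equiv.swap a₀ b₀ (ω' 0) = _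
      rw [hb, Equiv.swap_apply_right]
      simp [badChain]
  | succ j ih =>
      intro hbad
      obtain ⟨h1, h2⟩ := ih (fun i hi => hbad i (hi.trans (Nat.le_succ j)))
      have hsw : Equiv.swap ((ω' j).inv) ((chainF a₀ b₀ ω' j).inv) (ω' (j + 1)) ≠ ω' (j + 1) :=
        hbad (j + 1) le_rfl
      have hcase : ω' (j + 1) = (ω' j).inv ∨ ω' (j + 1) = (chainF a₀ b₀ ω' j).inv := by
        by_contra hc
        push_neg at hc
        exact hsw (Equiv.swap_apply_of_ne_of_ne hc.1 hc.2)
      have hb : ω' (j + 1) = (chainF a₀ b₀ ω' j).inv := hcase.resolve_left (hbs j)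
      have hc2 : chainF a₀ b₀ ω' (j + 1) = (ω' j).inv := by
        show Equiv.swap _ _ _ = _
        rw [hb, Equiv.swap_apply_right]
      constructor
      · rw [hb, h2]
        by_cases hj : Even j <;> simp [badChain, badSeq, Nat.even_add_one, hj]
      · rw [hc2, h1]
        by_cases hj : Even j <;> simp [badChain, badSeq, Nat.even_add_one, hj]

lemma head?_prefixSeq (J : ℕ) (τ : ℕ → Letter s t) :
    (prefixSeq (J + 1) τ).head? = some (τ 0) := by
  rw [prefixSeq, List.range_succ_eq_map, List.map_cons]
  rfl

lemma bad_red {z : List (Letter s t)} (hz : RedWord z) (hnez : z ≠ []) {d₀ : Letter s t}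
    (hd : d₀ ≠ (z.getLast hnez).inv) (J : ℕ) :
    RedWord (z ++ prefixSeq (J + 1) (badSeq (z.getLast hnez).inv d₀)) := by
  set c₀ := (z.getLast hnez).inv with hc₀
  rw [RedWord, List.Chain', List.isChain_append]
  refine ⟨hz, prefixSeq_red (badSeq_bseq (fun hc => hd hc.symm)), ?_⟩
  intro a ha b hb
  rw [List.getLast?_eq_getLast hnez, Option.mem_some_iff] at ha
  rw [head?_prefixSeq, Option.mem_some_iff] at hb
  subst ha
  subst hb
  show badSeq c₀ d₀ 0 ≠ _
  simpa [badSeq] using hd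

lemma bad_null {n : ℕ} (hn : 2 ≤ n) (ν : Measure (Boundary s t))
    (hν : ∀ z : List (Letter s t), RedWord z → z ≠ [] →
      ν (cyl z) = (1 / (n + 1) : ℝ≥0∞) * (1 / n) ^ (z.length - 1))
    {z : List (Letter s t)} (hz : RedWord z) (hnez : z ≠ []) (d₀ : Letter s t) :
    ν {ω : Boundary s t | ω ∈ cyl z ∧
      ∀ j, chainF (z.getLast hnez).inv d₀ (dropSeq z.length ω.1) j ≠
        dropSeq z.length ω.1 j} = 0 := by
  set c₀ := (z.getLast hnez).inv with hc₀
  by_cases hd : d₀ = c₀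
  · convert measure_empty
    · ext ω
      simp only [Set.mem_setOf_eq, Set.mem_empty_iff_false, iff_false, not_and]
      intro _ hbad
      apply hbad 0
      show Equiv.swap c₀ d₀ _ = _
      rw [hd, Equiv.swap_self]
      rfl
    · infer_instance
  · -- the bad set is contained in arbitrarily small cylinders
    set S := {ω : Boundary s t | ω ∈ cyl z ∧
      ∀ j, chainF c₀ d₀ (dropSeq z.length ω.1) j ≠ dropSeq z.length ω.1 j} with hS
    have hsub : ∀ J : ℕ, S ⊆ cyl (z ++ prefixSeq (J + 1) (badSeq c₀ d₀)) := by
      intro J ω hω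
      obtain ⟨hω1, hω2⟩ := hω
      have h0 : dropSeq z.length ω.1 0 ≠ c₀ := by
        show ω.1 (z.length + 0) ≠ _
        rw [Nat.add_zero]
        exact mem_cyl_head_ne hnez hω1
      have hforced : ∀ j, dropSeq z.length ω.1 j = badSeq c₀ d₀ j := fun j =>
        (bad_forced (dropSeq_bseq ω.2) h0 j (fun i _ => hω2 i)).1
      intro i hi
      have hi' : i < z.length + (J + 1) := by
        simp only [List.length_append, length_prefixSeq] at hi
        exact hi
      simp only [List.get_eq_getElem]
      rcases lt_or_ge i z.length with hiz | hiz
      · rw [List.getElem_append_left hiz]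
        have := hω1 i hiz
        simpa using this
      · rw [List.getElem_append_right hiz]
        have hget : (prefixSeq (J + 1) (badSeq c₀ d₀))[i - z.length]'(by
            simp only [length_prefixSeq]; omega) = badSeq c₀ d₀ (i - z.length) := by
          have := get_prefixSeq (L := J + 1) (ω := badSeq c₀ d₀) (i := i - z.length)
            (by simp only [length_prefixSeq]; omega)
          simpa using this
        rw [hget, ← hforced (i - z.length)]
        show ω.1 i = ω.1 (z.length + (i - z.length))
        have e2 : z.length + (i - z.length) = i := by omega
        rw [e2]
    have hbound : ∀ J : ℕ, ν S ≤
        ((1 / (n + 1) : ℝ≥0∞) * (1 / n) ^ z.length) * ((1 / n : ℝ≥0∞)) ^ J := by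
      intro J
      have hr := hν _ (bad_red hz hnez (by rw [← hc₀]; exact hd) J)
        (fun hc => hnez (List.append_eq_nil_iff.mp hc).1)
      calc ν S ≤ ν (cyl (z ++ prefixSeq (J + 1) (badSeq c₀ d₀))) := measure_mono (hsub J)
        _ = (1 / (n + 1) : ℝ≥0∞) * (1 / n) ^ ((z ++ prefixSeq (J + 1) (badSeq c₀ d₀)).length - 1) := hr
        _ = ((1 / (n + 1) : ℝ≥0∞) * (1 / n) ^ z.length) * ((1 / n : ℝ≥0∞)) ^ J := by
            rw [List.length_append, length_prefixSeq]
            have e : z.length + (J + 1) - 1 = z.length + J := by omega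
            rw [e, pow_add, mul_assoc]
    have hlt : (1 / n : ℝ≥0∞) < 1 := by
      rw [one_div, ENNReal.inv_lt_one]
      exact_mod_cast Nat.lt_of_lt_of_le one_lt_two hn
    have hC : ((1 / (n + 1) : ℝ≥0∞) * (1 / n) ^ z.length) ≠ ⊤ := by
      apply ENNReal.mul_ne_top
      · rw [one_div]
        apply ENNReal.inv_ne_top.mpr
        intro hc
        rw [add_eq_zero] at hc
        exact one_ne_zero hc.2
      · apply ENNReal.pow_ne_top
        rw [one_div]
        refine ENNReal.inv_ne_top.mpr ?_
        have h2 : (0 : ℕ) < n := by omega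
        exact_mod_cast (Nat.cast_pos.mpr h2).ne'
    have htend := ENNReal.Tendsto.const_mul
      (ENNReal.tendsto_pow_atTop_nhds_zero_of_lt_one hlt) (Or.inr hC)
    rw [mul_zero] at htend
    exact le_antisymm (ge_of_tendsto' htend hbound) zero_le

end CylEx

/-- For any two reduced words `x, y ∈ Γ` of the same length `m ≥ 1`,
there exists a measure-preserving Borel automorphism `k` of `(Ω, ν)` mapping `Ω^x`
bijectively onto `Ω^y` up to a null set, equal to the identity off `Ω^x ∪ Ω^y`, and
with `kω ∈ Γω` for `ν`-a.e. `ω`; i.e. `k` lies in the measure-preserving full group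
`[Γ]₀`. -/
theorem exists_fullGroup_cylinder_exchange (s t n m : ℕ) (hn : 2 ≤ n)
    (hst : s + 2 * t = n + 1) (hm : 1 ≤ m)
    (ν : Measure (Boundary s t)) [IsProbabilityMeasure ν]
    (hν : ∀ z : List (Letter s t), RedWord z → z ≠ [] →
      ν (cyl z) = (1 / (n + 1) : ℝ≥0∞) * (1 / n) ^ (z.length - 1))
    (x y : List (Letter s t)) (hx : RedWord x) (hy : RedWord y)
    (hxl : x.length = m) (hyl : y.length = m) :
    ∃ k : Equiv.Perm (Boundary s t),
      Measurable ⇑k ∧ Measurable ⇑k.symm ∧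
      (∀ A : Set (Boundary s t), MeasurableSet A → ν (⇑k ⁻¹' A) = ν A) ∧
      ν (symmDiff (⇑k '' cyl x) (cyl y)) = 0 ∧
      (∀ ω ∉ cyl x ∪ cyl y, k ω = ω) ∧
      (∀ᵐ ω ∂ν, ∃ g : List (Letter s t), RedWord g ∧ k ω = act g ω) := by
  classical
  have hnex : x ≠ [] := by
    intro h; rw [h] at hxl; simp at hxl; omega
  have hney : y ≠ [] := by
    intro h; rw [h] at hyl; simp at hyl; omega
  have hlen : x.length = y.length := by rw [hxl, hyl]
  have hcard : 1 < Fintype.card (Letter s t) := by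
    have hc1 : Fintype.card (Letter s t) = s + t * 2 := by
      simp [Fintype.card_sum, Fintype.card_prod]
    omega
  set f := CylEx.kfun x y hx hy hlen hnex hney with hf
  have hinv := CylEx.kfun_invol x y hx hy hlen hnex hney
  have hk : Measurable f := CylEx.kfun_measurable x y hx hy hlen hnex hney hcard
  refine ⟨Function.Involutive.toPerm f hinv, ?_, ?_, ?_, ?_, ?_, ?_⟩
  · exact hk
  · exact hk
  · -- measure preservation
    have hmap : Measure.map f ν = ν := by
      haveI := Measure.isProbabilityMeasure_map (μ := ν) hk.aemeasurable
      refine ext_of_generate_finite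
        {S | ∃ z : List (Letter s t), RedWord z ∧ z ≠ [] ∧ S = cyl z} rfl ?_ ?_ ?_
      · rintro S1 ⟨z1, hz1, hne1, rfl⟩ S2 ⟨z2, hz2, hne2, rfl⟩ hne
        obtain ⟨ω, hω1, hω2⟩ := hne
        rcases le_total z1.length z2.length with hle | hle
        · have hpre : z1 <+: z2 := CylEx.prefix_of_agree hle
            (fun i hi => by rw [← hω1 i hi, ← hω2 i (lt_of_lt_of_le hi hle)])
          rw [Set.inter_eq_self_of_subset_right (CylEx.cyl_subset_of_prefix hpre)]
          exact ⟨z2, hz2, hne2, rfl⟩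
        · have hpre : z2 <+: z1 := CylEx.prefix_of_agree hle
            (fun i hi => by rw [← hω2 i hi, ← hω1 i (lt_of_lt_of_le hi hle)])
          rw [Set.inter_eq_self_of_subset_left (CylEx.cyl_subset_of_prefix hpre)]
          exact ⟨z1, hz1, hne1, rfl⟩
      · rintro S ⟨z, hz, hnez, rfl⟩
        rw [Measure.map_apply hk (CylEx.measurableSet_cyl hz hnez)]
        exact CylEx.kfun_measure_preimage_cyl x y hx hy hlen hnex hney hcard ν n hν hz hnez
      · rw [Measure.map_apply hk MeasurableSet.univ, Set.preimage_univ]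
    intro A hA
    show ν (f ⁻¹' A) = ν A
    rw [← Measure.map_apply hk hA, hmap]
  · -- the image of cyl x is exactly cyl y
    have himg : f '' cyl x = cyl y := by
      apply Set.Subset.antisymm
      · rintro _ ⟨ω, hω, rfl⟩
        exact CylEx.kfun_mem_y x y hx hy hlen hnex hney hω
      · intro τ hτ
        exact ⟨f τ, CylEx.kfun_mem_x x y hx hy hlen hnex hney hτ, hinv τ⟩
    show ν (symmDiff (f '' cyl x) (cyl y)) = 0
    rw [himg, symmDiff_self]
    simp
  · intro ω hω
    rw [Set.mem_union] at hω
    push_neg at hω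
    exact CylEx.kfun_of_not_mem x y hx hy hlen hnex hney hω.1 hω.2
  · rw [MeasureTheory.ae_iff]
    set a₀ := (x.getLast hnex).inv with ha₀
    set b₀ := (y.getLast hney).inv with hb₀
    refine measure_mono_null ?_
      (measure_union_null (CylEx.bad_null hn ν hν hx hnex b₀)
        (CylEx.bad_null hn ν hν hy hney a₀))
    intro ω hω
    simp only [Set.mem_setOf_eq, not_exists, not_and] at hω
    by_cases hωx : ω ∈ cyl x
    · left
      refine ⟨hωx, ?_⟩
      intro j
      by_contra hj
      have hsync := CylEx.chainF_sync hj
      have htail : shift^[x.length + j] (f ω) = shift^[x.length + j] ω := by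
        apply Subtype.ext
        funext i
        rw [CylEx.shift_iterate, CylEx.shift_iterate]
        rw [hf, CylEx.kfun_of_mem_x x y hx hy hlen hnex hney hωx]
        show CylEx.concatSeq y _ (x.length + j + i) = ω.1 (x.length + j + i)
        rw [CylEx.concatSeq_ge (by omega : y.length ≤ x.length + j + i)]
        have e : x.length + j + i - y.length = j + i := by omega
        rw [e, hsync (j + i) (by omega)]
        show ω.1 (x.length + (j + i)) = _
        have e2 : x.length + (j + i) = x.length + j + i := by omega
        rw [e2]
      obtain ⟨g, hg1, hg2⟩ := CylEx.exists_act_of_shift_eq _ htail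
      exact hω g hg1 hg2.symm
    · by_cases hωy : ω ∈ cyl y
      · right
        refine ⟨hωy, ?_⟩
        intro j
        by_contra hj
        have hsync := CylEx.chainF_sync hj
        have htail : shift^[y.length + j] (f ω) = shift^[y.length + j] ω := by
          apply Subtype.ext
          funext i
          rw [CylEx.shift_iterate, CylEx.shift_iterate]
          rw [hf, CylEx.kfun_of_mem_y x y hx hy hlen hnex hney hωx hωy]
          show CylEx.concatSeq x _ (y.length + j + i) = ω.1 (y.length + j + i)
          rw [CylEx.concatSeq_ge (by omega : x.length ≤ y.length + j + i)]
          have e : y.length + j + i - x.length = j + i := by omega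
          rw [e, hsync (j + i) (by omega)]
          show ω.1 (y.length + (j + i)) = _
          have e2 : y.length + (j + i) = y.length + j + i := by omega
          rw [e2]
        obtain ⟨g, hg1, hg2⟩ := CylEx.exists_act_of_shift_eq _ htail
        exact hω g hg1 hg2.symm
      · exfalso
        exact hω [] List.isChain_nil
          (CylEx.kfun_of_not_mem x y hx hy hlen hnex hney hωx hωy)
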